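/- Let p : (X,T) → (Y,S) be an extension of Cantor minimal systems factoring as X →ʳ Z →q Y where q has connected fibers and r is a proximal extension. Then for every n ≥ 1, every continuous T×ⁿ-invariant integer-valued function on Xⁿ_p is constant; in particular I(Xⁿ_p) ≅ ℤ. -/

import Mathlib

/-- The `n`-th relative cartesian power `Xⁿ_p` of `X` with respect to `p : X → Y`. -/
abbrev FiberPow {X Y : Type*} (p : X → Y) (n : ℕ) : Type _ :=
  {v : Fin n → X // ∀ i j, p (v i) = p (v j)}

open Set Topology Filter


/-- Existence of a minimal nonempty closed forward-invariant subset (Zorn). -/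
theorem aux_exists_minimal {E : Type*} [TopologicalSpace E] [CompactSpace E]
    {F : E → E} {W : Set E} (hne : W.Nonempty)
    (hcl : IsClosed W) (hmap : Set.MapsTo F W W) :
    ∃ M, M ⊆ W ∧ M.Nonempty ∧ IsClosed M ∧ Set.MapsTo F M M ∧
      ∀ K, K ⊆ M → K.Nonempty → IsClosed K → Set.MapsTo F K K → K = M := by
  set S : Set (Set E) := {K | K.Nonempty ∧ IsClosed K ∧ Set.MapsTo F K K} with hS
  have H : ∀ c ⊆ S, IsChain (· ⊆ ·) c → c.Nonempty → ∃ lb ∈ S, ∀ s ∈ c, lb ⊆ s := by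
    intro c hcS hchain hcne
    refine ⟨⋂₀ c, ⟨?_, isClosed_sInter fun U hU => (hcS hU).2.1, ?_⟩,
      fun s hs => sInter_subset_of_mem hs⟩
    · haveI : Nonempty c := hcne.to_subtype
      refine IsCompact.nonempty_sInter_of_directed_nonempty_isCompact_isClosed ?_
        (fun U hU => (hcS hU).1) (fun U hU => (hcS hU).2.1.isCompact)
        (fun U hU => (hcS hU).2.1)
      intro x hx y hy
      rcases eq_or_ne x y with rfl | hxy
      · exact ⟨x, hx, subset_rfl, subset_rfl⟩
      rcases hchain hx hy hxy with h | h
      · exact ⟨x, hx, subset_rfl, h⟩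
      · exact ⟨y, hy, h, subset_rfl⟩
    · intro x hx
      exact mem_sInter.2 fun U hU => (hcS hU).2.2 (mem_sInter.1 hx U hU)
  obtain ⟨M, hMW, hMmin⟩ := zorn_superset_nonempty S H W ⟨hne, hcl, hmap⟩
  exact ⟨M, hMW, hMmin.prop.1, hMmin.prop.2.1, hMmin.prop.2.2,
    fun K hKM hKne hKcl hKmap =>
      Set.Subset.antisymm hKM (hMmin.2 ⟨hKne, hKcl, hKmap⟩ hKM)⟩

/-- The image of a minimal set under an equivariant map is minimal. -/
theorem aux_image_minimal {E E' : Type*} [TopologicalSpace E] [CompactSpace E]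
    [TopologicalSpace E'] [T2Space E']
    {F : E → E} {G : E' → E'} {π : E → E'} (hπ : Continuous π)
    (hcomm : ∀ x, π (F x) = G (π x))
    {M : Set E} (hMne : M.Nonempty) (hMcl : IsClosed M) (hMmap : Set.MapsTo F M M)
    (hMmin : ∀ K, K ⊆ M → K.Nonempty → IsClosed K → Set.MapsTo F K K → K = M) :
    (π '' M).Nonempty ∧ IsClosed (π '' M) ∧ Set.MapsTo G (π '' M) (π '' M) ∧
      ∀ K, K ⊆ π '' M → K.Nonempty → IsClosed K → Set.MapsTo G K K → K = π '' M := by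
  refine ⟨hMne.image π, (hMcl.isCompact.image hπ).isClosed, ?_, ?_⟩
  · rintro _ ⟨u, hu, rfl⟩
    exact (hcomm u) ▸ mem_image_of_mem π (hMmap hu)
  · intro K hKN hKne hKcl hKmap
    have hK' : M ∩ π ⁻¹' K = M := by
      refine hMmin _ inter_subset_left ?_ (hMcl.inter (hKcl.preimage hπ)) ?_
      · obtain ⟨k0, hk0⟩ := hKne
        obtain ⟨u, huM, rfl⟩ := hKN hk0
        exact ⟨u, huM, hk0⟩
      · rintro u ⟨huM, huK⟩
        exact ⟨hMmap huM, by simpa [hcomm u] using hKmap huK⟩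
    refine Set.Subset.antisymm hKN ?_
    rintro _ ⟨u, huM, rfl⟩
    rw [← hK'] at huM
    exact huM.2

/-- The forward orbit closure of any point of a minimal set is the whole set. -/
theorem aux_orbit_closure_eq {E : Type*} [TopologicalSpace E]
    {F : E → E} (hF : Continuous F)
    {M : Set E} (hMcl : IsClosed M) (hMmap : Set.MapsTo F M M)
    (hMmin : ∀ K, K ⊆ M → K.Nonempty → IsClosed K → Set.MapsTo F K K → K = M)
    {x : E} (hx : x ∈ M) :
    closure (Set.range fun k : ℕ => F^[k] x) = M := by
  set orb : Set E := Set.range fun k : ℕ => F^[k] x with horb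
  have horbM : orb ⊆ M := by
    rintro _ ⟨k, rfl⟩
    exact hMmap.iterate k hx
  have himg : F '' orb ⊆ orb := by
    rintro _ ⟨_, ⟨k, rfl⟩, rfl⟩
    exact ⟨k + 1, by simp [Function.iterate_succ_apply' F k x]⟩
  refine hMmin _ (closure_minimal horbM hMcl) ⟨x, subset_closure ⟨0, rfl⟩⟩
    isClosed_closure ?_
  intro u hu
  exact closure_mono himg ((image_closure_subset_closure_image hF) ⟨u, hu, rfl⟩)


theorem aux_pow_eq_iterate {X : Type*} [TopologicalSpace X] (T : X ≃ₜ X) (k : ℕ) (x : X) :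
    (T.toEquiv ^ k) x = (⇑T)^[k] x := by
  induction k generalizing x with
  | zero => simp
  | succ k ih =>
    rw [pow_succ, Equiv.Perm.mul_apply, Function.iterate_succ_apply]
    exact ih (T x)

/-- A minimal set contained in the relation `r x = r x'` of a proximal extension
is contained in the diagonal. -/
theorem aux_minimal_subset_diag {X Z : Type*} [MetricSpace X] [CompactSpace X]
    [TopologicalSpace Z] [T2Space Z] (T : X ≃ₜ X) (r : C(X, Z))
    (hprox : ∀ x x' : X, r x = r x' → ∀ δ : ℝ, 0 < δ →
      ∃ k : ℕ, 0 < k ∧ dist ((T.toEquiv ^ k) x) ((T.toEquiv ^ k) x') < δ)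
    {N : Set (X × X)} (hNne : N.Nonempty) (hNcl : IsClosed N)
    (hNmap : Set.MapsTo (fun c : X × X => (T c.1, T c.2)) N N)
    (hNmin : ∀ K, K ⊆ N → K.Nonempty → IsClosed K →
      Set.MapsTo (fun c : X × X => (T c.1, T c.2)) K K → K = N)
    (hNr : ∀ c ∈ N, r c.1 = r c.2) :
    ∀ c ∈ N, c.1 = c.2 := by
  set G : X × X → X × X := fun c => (T c.1, T c.2) with hG
  have hGc : Continuous G := (T.continuous.comp continuous_fst).prodMk
    (T.continuous.comp continuous_snd)
  have hGiter : ∀ (k : ℕ) (c : X × X), G^[k] c = ((⇑T)^[k] c.1, (⇑T)^[k] c.2) := by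
    intro k
    induction k with
    | zero => intro c; rfl
    | succ k ih =>
      intro c
      rw [Function.iterate_succ_apply, ih (G c)]
      simp [hG, Function.iterate_succ_apply]
  -- pick any point of N and produce a diagonal point in N
  obtain ⟨ab, habN⟩ := hNne
  have hab : r ab.1 = r ab.2 := hNr ab habN
  have hkm : ∀ m : ℕ, ∃ k : ℕ, 0 < k ∧
      dist ((⇑T)^[k] ab.1) ((⇑T)^[k] ab.2) < 1 / ((m : ℝ) + 1) := by
    intro m
    obtain ⟨k, hk, hd⟩ := hprox ab.1 ab.2 hab (1 / ((m : ℝ) + 1))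
      (by positivity)
    refine ⟨k, hk, ?_⟩
    rwa [aux_pow_eq_iterate, aux_pow_eq_iterate] at hd
  choose km hkm0 hkmd using hkm
  set seq : ℕ → X × X := fun m => G^[km m] ab with hseq
  have hseqN : ∀ m, seq m ∈ N := fun m => hNmap.iterate (km m) habN
  obtain ⟨cd, hcdN, φ, hφ, hlim⟩ := hNcl.isCompact.tendsto_subseq hseqN
  have hcddiag : cd.1 = cd.2 := by
    have hd1 : Tendsto (fun m => (seq (φ m)).1) atTop (𝓝 cd.1) :=
      (continuous_fst.tendsto cd).comp hlim
    have hd2 : Tendsto (fun m => (seq (φ m)).2) atTop (𝓝 cd.2) :=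
      (continuous_snd.tendsto cd).comp hlim
    have hdist : Tendsto (fun m => dist (seq (φ m)).1 (seq (φ m)).2) atTop
        (𝓝 (dist cd.1 cd.2)) := hd1.dist hd2
    have hbound : ∀ m : ℕ, dist (seq (φ m)).1 (seq (φ m)).2 ≤ 1 / ((m : ℝ) + 1) := by
      intro m
      have h1 : dist (seq (φ m)).1 (seq (φ m)).2 < 1 / ((φ m : ℝ) + 1) := by
        simp only [hseq, hGiter]
        exact hkmd (φ m)
      refine h1.le.trans (one_div_le_one_div_of_le (by positivity) ?_)
      have hmle : m ≤ φ m := hφ.le_apply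
      have : (m : ℝ) ≤ (φ m : ℝ) := Nat.cast_le.2 hmle
      linarith
    have hzero : Tendsto (fun m : ℕ => 1 / ((m : ℝ) + 1)) atTop (𝓝 0) :=
      tendsto_one_div_add_atTop_nhds_zero_nat
    have : dist cd.1 cd.2 ≤ 0 := le_of_tendsto_of_tendsto' hdist hzero hbound
    exact dist_le_zero.1 (le_antisymm this dist_nonneg ▸ this)
  -- the orbit closure of the diagonal point is N and is contained in the diagonal
  have horb := aux_orbit_closure_eq hGc hNcl hNmap hNmin hcdN
  have hdiagcl : IsClosed {c : X × X | c.1 = c.2} := isClosed_diagonal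
  have horbdiag : closure (Set.range fun k : ℕ => G^[k] cd) ⊆ {c : X × X | c.1 = c.2} := by
    refine closure_minimal ?_ hdiagcl
    rintro _ ⟨k, rfl⟩
    simp only [mem_setOf_eq, hGiter]
    rw [hcddiag]
  intro c hc
  exact horbdiag (horb ▸ hc)

/-- Key lemma: if `r ∘ v = r ∘ w` coordinatewise then `f v = f w`, for any
continuous invariant `f` (proximality of `r`). -/
theorem aux_key_prox {X Z : Type*} [MetricSpace X] [CompactSpace X]
    [MetricSpace Z] [CompactSpace Z]
    (T : X ≃ₜ X) (r : C(X, Z)) (R : Z ≃ₜ Z)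
    (hfacr : ∀ x : X, r (T x) = R (r x))
    (hprox : ∀ x x' : X, r x = r x' → ∀ δ : ℝ, 0 < δ →
      ∃ k : ℕ, 0 < k ∧ dist ((T.toEquiv ^ k) x) ((T.toEquiv ^ k) x') < δ)
    {n : ℕ} (P : (Fin n → X) → Prop) (hPc : IsClosed {v | P v})
    (hPT : ∀ v, P v → P (fun i => T (v i)))
    (f : C({v : Fin n → X // P v}, ℤ))
    (hinv : ∀ v : {v : Fin n → X // P v}, f ⟨fun i => T (v.1 i), hPT v.1 v.2⟩ = f v)
    (v w : {v : Fin n → X // P v}) (hr : ∀ i, r (v.1 i) = r (w.1 i)) :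
    f v = f w := by
  classical
  set E := (Fin n → X) × (Fin n → X) with hE
  set F : E → E := fun u => (fun i => T (u.1 i), fun i => T (u.2 i)) with hF
  have hFc : Continuous F := by
    apply Continuous.prodMk
    · exact continuous_pi fun i => T.continuous.comp ((continuous_apply i).comp continuous_fst)
    · exact continuous_pi fun i => T.continuous.comp ((continuous_apply i).comp continuous_snd)
  have hFiter : ∀ (k : ℕ) (u : E),
      F^[k] u = (fun i => (⇑T)^[k] (u.1 i), fun i => (⇑T)^[k] (u.2 i)) := by
    intro k
    induction k with
    | zero => intro u; rfl
    | succ k ih =>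
      intro u
      rw [Function.iterate_succ_apply, ih (F u)]
      simp only [hF]
      exact Prod.ext (funext fun i => by simp [Function.iterate_succ_apply])
        (funext fun i => by simp [Function.iterate_succ_apply])
  set ξ : E := (v.1, w.1) with hξ
  set orb : Set E := Set.range fun k : ℕ => F^[k] ξ with horb
  set W : Set E := closure orb with hW
  have hWne : W.Nonempty := ⟨ξ, subset_closure ⟨0, rfl⟩⟩
  have hWcl : IsClosed W := isClosed_closure
  have himg : F '' orb ⊆ orb := by
    rintro _ ⟨_, ⟨k, rfl⟩, rfl⟩
    exact ⟨k + 1, by simp [Function.iterate_succ_apply' F k ξ]⟩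
  have hWmap : Set.MapsTo F W W := fun x hx =>
    closure_mono himg ((image_closure_subset_closure_image hFc) ⟨x, hx, rfl⟩)
  -- two closed invariant sets containing the orbit
  have hWr : ∀ u ∈ W, ∀ i, r (u.1 i) = r (u.2 i) := by
    have hcl : IsClosed {u : E | ∀ i, r (u.1 i) = r (u.2 i)} := by
      rw [Set.setOf_forall]
      exact isClosed_iInter fun i => isClosed_eq
        (r.continuous.comp ((continuous_apply i).comp continuous_fst))
        (r.continuous.comp ((continuous_apply i).comp continuous_snd))
    have hstep : ∀ u : E, (∀ i, r (u.1 i) = r (u.2 i)) → ∀ i, r ((F u).1 i) = r ((F u).2 i) := by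
      intro u hu i
      simp only [hF, hfacr, hu i]
    have horbsub : orb ⊆ {u : E | ∀ i, r (u.1 i) = r (u.2 i)} := by
      rintro _ ⟨k, rfl⟩
      induction k with
      | zero => exact hr
      | succ k ih =>
        show F^[k + 1] ξ ∈ _
        rw [Function.iterate_succ_apply']
        exact hstep _ ih
    exact fun u hu => closure_minimal horbsub hcl hu
  have hWP : ∀ u ∈ W, P u.1 ∧ P u.2 := by
    have hcl : IsClosed {u : E | P u.1 ∧ P u.2} :=
      (hPc.preimage continuous_fst).inter (hPc.preimage continuous_snd)
    have horbsub : orb ⊆ {u : E | P u.1 ∧ P u.2} := by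
      rintro _ ⟨k, rfl⟩
      induction k with
      | zero => exact ⟨v.2, w.2⟩
      | succ k ih =>
        show F^[k + 1] ξ ∈ _
        rw [Function.iterate_succ_apply']
        exact ⟨hPT _ ih.1, hPT _ ih.2⟩
    exact fun u hu => closure_minimal horbsub hcl hu
  -- take a minimal subset and a point in it
  obtain ⟨M, hMW, hMne, hMcl, hMmap, hMmin⟩ := aux_exists_minimal hWne hWcl hWmap
  obtain ⟨η, hη⟩ := id hMne
  have hdiag : ∀ i, η.1 i = η.2 i := by
    intro i
    set π : E → X × X := fun u => (u.1 i, u.2 i) with hπ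
    have hπc : Continuous π :=
      ((continuous_apply i).comp continuous_fst).prodMk
        ((continuous_apply i).comp continuous_snd)
    obtain ⟨hNne, hNcl, hNmap, hNmin⟩ :=
      aux_image_minimal (G := fun c : X × X => (T c.1, T c.2)) hπc (fun u => rfl)
        hMne hMcl hMmap hMmin
    have hNr : ∀ c ∈ π '' M, r c.1 = r c.2 := by
      rintro _ ⟨u, huM, rfl⟩
      exact hWr u (hMW huM) i
    have := aux_minimal_subset_diag T r hprox hNne hNcl hNmap hNmin hNr (π η)
      ⟨η, hη, rfl⟩
    exact this
  have hη2 : η.2 = η.1 := funext fun i => (hdiag i).symm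
  have hPη : P η.1 := (hWP η (hMW hη)).1
  set cfp : {v : Fin n → X // P v} := ⟨η.1, hPη⟩ with hcfp
  set m : ℤ := f cfp with hm
  -- an open set witnessing the fiber of f through cfp
  have hopen : IsOpen (⇑f ⁻¹' {m}) := (isOpen_discrete {m}).preimage f.continuous
  obtain ⟨U, hU, hUval⟩ := isOpen_induced_iff.mp hopen
  have hc₀U : η.1 ∈ U := by
    have : cfp ∈ Subtype.val ⁻¹' U := by rw [hUval]; rfl
    exact this
  -- η = (η.1, η.1) lies in W, so the orbit visits U ×ˢ U
  have hηW : η ∈ W := hMW hη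
  have hηmem : η ∈ U ×ˢ U := by
    refine ⟨hc₀U, ?_⟩
    rw [hη2]; exact hc₀U
  obtain ⟨x, hxUU, hxorb⟩ := mem_closure_iff.mp hηW (U ×ˢ U) (hU.prod hU) hηmem
  obtain ⟨k, rfl⟩ := hxorb
  have hxUU' : (fun i => (⇑T)^[k] (ξ.1 i), fun i => (⇑T)^[k] (ξ.2 i)) ∈ U ×ˢ U := by
    rw [← hFiter k ξ]
    exact hxUU
  -- transfer back through the invariance of f
  set step : {v : Fin n → X // P v} → {v : Fin n → X // P v} :=
    fun u => ⟨fun i => T (u.1 i), hPT u.1 u.2⟩ with hstepdef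
  have hstepval : ∀ (k : ℕ) (u : {v : Fin n → X // P v}),
      (step^[k] u).1 = fun i => (⇑T)^[k] (u.1 i) := by
    intro k
    induction k with
    | zero => intro u; rfl
    | succ k ih =>
      intro u
      rw [Function.iterate_succ_apply']
      funext i
      show T ((step^[k] u).1 i) = (⇑T)^[k + 1] (u.1 i)
      rw [ih u]
      simp [Function.iterate_succ_apply']
  have hstepf : ∀ (k : ℕ) (u : {v : Fin n → X // P v}), f (step^[k] u) = f u := by
    intro k
    induction k with
    | zero => intro u; rfl
    | succ k ih =>
      intro u
      rw [Function.iterate_succ_apply']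
      exact (hinv (step^[k] u)).trans (ih u)
  have hmemf : ∀ u : {v : Fin n → X // P v}, u.1 ∈ U → f u = m := by
    intro u hu
    have : u ∈ Subtype.val ⁻¹' U := hu
    rw [hUval] at this
    exact this
  have hfv : f v = m := by
    rw [← hstepf k v]
    refine hmemf _ ?_
    rw [hstepval]
    exact hxUU'.1
  have hfw : f w = m := by
    rw [← hstepf k w]
    refine hmemf _ ?_
    rw [hstepval]
    exact hxUU'.2
  rw [hfv, hfw]


/-- let `p = q ∘ r : X → Z → Y` be an extension of Cantor minimal
systems where `q` has connected fibers and `r` is proximal.  Then every continuous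
`T×ⁿ`-invariant integer-valued function on `Xⁿ_p` is constant (so `I(Xⁿ_p) ≅ ℤ`). -/
theorem invariant_const_of_connected_fibers {X Y Z : Type*}
    [MetricSpace X] [CompactSpace X]
    [TotallyDisconnectedSpace X] [PerfectSpace X] [Nonempty X]
    [MetricSpace Y] [CompactSpace Y]
    [TotallyDisconnectedSpace Y] [PerfectSpace Y] [Nonempty Y]
    [MetricSpace Z] [CompactSpace Z] [Nonempty Z]
    (T : X ≃ₜ X) (S : Y ≃ₜ Y) (R : Z ≃ₜ Z)
    (hminX : ∀ x : X, Dense (Set.range fun n : ℤ => (T.toEquiv ^ n) x))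
    (hminY : ∀ y : Y, Dense (Set.range fun n : ℤ => (S.toEquiv ^ n) y))
    (hminZ : ∀ z : Z, Dense (Set.range fun n : ℤ => (R.toEquiv ^ n) z))
    (r : C(X, Z)) (hrs : Function.Surjective r)
    (q : C(Z, Y)) (hqs : Function.Surjective q)
    (p : C(X, Y)) (hpqr : ∀ x : X, p x = q (r x))
    (hfacr : ∀ x : X, r (T x) = R (r x))
    (hfacq : ∀ z : Z, q (R z) = S (q z))
    (hconn : ∀ y : Y, IsConnected (q ⁻¹' {y}))
    (hprox : ∀ x x' : X, r x = r x' → ∀ δ : ℝ, 0 < δ →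
      ∃ k : ℕ, 0 < k ∧ dist ((T.toEquiv ^ k) x) ((T.toEquiv ^ k) x') < δ)
    (n : ℕ) (hn : 1 ≤ n) (f : C(FiberPow (⇑p) n, ℤ))
    (hinv : ∀ v : FiberPow (⇑p) n,
      f ⟨fun i => T (v.1 i), by
          intro i j
          rw [hpqr, hpqr, hfacr, hfacr, hfacq, hfacq]
          have := v.2 i j
          rw [hpqr, hpqr] at this
          rw [this]⟩ = f v) :
    ∀ v w : FiberPow (⇑p) n, f v = f w := by
  classical
  have hi0 : 0 < n := hn
  set i0 : Fin n := ⟨0, hi0⟩ with hi0def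
  -- the fiber-product condition is closed
  have hPc : IsClosed {u : Fin n → X | ∀ i j, p (u i) = p (u j)} := by
    have heq : {u : Fin n → X | ∀ i j, p (u i) = p (u j)} =
        ⋂ i, ⋂ j, {u : Fin n → X | p (u i) = p (u j)} := by
      ext u; simp [Set.mem_iInter]
    rw [heq]
    exact isClosed_iInter fun i => isClosed_iInter fun j =>
      isClosed_eq (p.continuous.comp (continuous_apply i))
        (p.continuous.comp (continuous_apply j))
  have hPT : ∀ u : Fin n → X, (∀ i j, p (u i) = p (u j)) →
      (∀ i j, p (T (u i)) = p (T (u j))) := by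
    intro u hu i j
    rw [hpqr, hpqr, hfacr, hfacr, hfacq, hfacq]
    have := hu i j
    rw [hpqr, hpqr] at this
    rw [this]
  haveI hcptFP : CompactSpace (FiberPow (⇑p) n) :=
    isCompact_iff_compactSpace.mp hPc.isCompact
  -- Step 1 : proximality collapses the r-relation
  have key1 : ∀ v w : FiberPow (⇑p) n, (∀ i, r (v.1 i) = r (w.1 i)) → f v = f w :=
    fun v w hr =>
      aux_key_prox T r R hfacr hprox (fun u => ∀ i j, p (u i) = p (u j)) hPc hPT f
        (fun v => hinv v) v w hr
  -- finite range of f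
  have hfin : (Set.range ⇑f).Finite :=
    ((IsLocallyConstant.iff_continuous ⇑f).mpr f.continuous).range_finite
  -- Step 2 : connected fibers of q collapse the `same base point` relation
  have key2 : ∀ v w : FiberPow (⇑p) n, p (v.1 i0) = p (w.1 i0) → f v = f w := by
    intro v w hvw
    set y : Y := p (v.1 i0) with hy
    set s : Set (Fin n → Z) := {u | ∀ i, q (u i) = y} with hs
    have hspre : IsPreconnected s := by
      have heq : s = Set.pi Set.univ (fun _ : Fin n => q ⁻¹' {y}) := by
        ext u; simp [hs, Set.mem_pi]
      rw [heq]
      exact isPreconnected_univ_pi fun i => (hconn y).isPreconnected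
    set ρ : FiberPow (⇑p) n → (Fin n → Z) := fun v' => fun i => r (v'.1 i) with hρ
    have hρc : Continuous ρ := continuous_pi fun i =>
      r.continuous.comp ((continuous_apply i).comp continuous_subtype_val)
    set C : ℤ → Set (Fin n → Z) := fun m => ρ '' (⇑f ⁻¹' {m}) with hC
    have hCcl : ∀ m, IsClosed (C m) := fun m =>
      (((IsClosed.preimage f.continuous isClosed_singleton).isCompact).image hρc).isClosed
    have hcov : ∀ u : Fin n → Z, (∀ i, q (u i) = y) →
        ∃ v' : FiberPow (⇑p) n, ρ v' = u := by
      intro u hu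
      choose x hx using fun i => hrs (u i)
      refine ⟨⟨x, ?_⟩, funext fun i => hx i⟩
      intro i j
      rw [hpqr, hpqr, hx, hx, hu i, hu j]
    obtain ⟨L, hL⟩ : ∃ L : ↥s → FiberPow (⇑p) n, ∀ u : ↥s, ρ (L u) = u.1 :=
      ⟨fun u => (hcov u.1 u.2).choose, fun u => (hcov u.1 u.2).choose_spec⟩
    set g : ↥s → ℤ := fun u => f (L u) with hg
    have hwell : ∀ (u : ↥s) (v' : FiberPow (⇑p) n), ρ v' = u.1 → f v' = g u := by
      intro u v' hv'
      refine key1 v' (L u) fun i => ?_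
      have : ρ v' i = ρ (L u) i := by rw [hv', hL u]
      exact this
    have hopenfib : ∀ m, IsOpen (g ⁻¹' {m}) := by
      intro m
      rw [← isClosed_compl_iff]
      have hcompl : (g ⁻¹' {m})ᶜ =
          Subtype.val ⁻¹' (⋃ m' ∈ hfin.toFinset.erase m, C m') := by
        ext u
        simp only [Set.mem_compl_iff, Set.mem_preimage, Set.mem_singleton_iff,
          Set.mem_iUnion, Finset.mem_erase, Set.Finite.mem_toFinset, exists_prop]
        constructor
        · intro hu
          exact ⟨g u, ⟨hu, ⟨L u, rfl⟩⟩, ⟨L u, rfl, hL u⟩⟩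
        · rintro ⟨m', ⟨hm'm, -⟩, v', hv'm, hρv'⟩
          have hgu := hwell u v' hρv'
          rw [Set.mem_preimage, Set.mem_singleton_iff] at hv'm
          rw [← hgu, hv'm]
          exact hm'm
      rw [hcompl]
      refine IsClosed.preimage continuous_subtype_val ?_
      exact Set.Finite.isClosed_biUnion (Finset.finite_toSet _) fun m' _ => hCcl m'
    have hlc : IsLocallyConstant g := by
      intro t
      have : g ⁻¹' t = ⋃ m ∈ t, g ⁻¹' {m} := by
        ext u; simp
      rw [this]
      exact isOpen_biUnion fun m _ => hopenfib m
    haveI : PreconnectedSpace ↥s := Subtype.preconnectedSpace hspre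
    have hvmem : ρ v ∈ s := by
      intro i
      show q (r (v.1 i)) = y
      rw [← hpqr]
      exact v.2 i i0
    have hwmem : ρ w ∈ s := by
      intro i
      show q (r (w.1 i)) = y
      rw [← hpqr]
      exact (w.2 i i0).trans hvw.symm
    have hconst : g ⟨ρ v, hvmem⟩ = g ⟨ρ w, hwmem⟩ :=
      hlc.apply_eq_of_isPreconnected isPreconnected_univ (Set.mem_univ _) (Set.mem_univ _)
    have h1 : f v = g ⟨ρ v, hvmem⟩ := hwell ⟨ρ v, hvmem⟩ v rfl
    have h2 : f w = g ⟨ρ w, hwmem⟩ := hwell ⟨ρ w, hwmem⟩ w rfl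
    rw [h1, h2, hconst]
  -- Step 3 : minimality of Y
  intro v w
  have hps : Function.Surjective ⇑p := by
    intro y
    obtain ⟨z, hz⟩ := hqs y
    obtain ⟨x, hx⟩ := hrs z
    exact ⟨x, by rw [hpqr, hx, hz]⟩
  obtain ⟨L2, hL2⟩ : ∃ L2 : Y → FiberPow (⇑p) n, ∀ y, p ((L2 y).1 i0) = y :=
    ⟨fun y => ⟨fun _ => (hps y).choose, fun i j => rfl⟩, fun y => (hps y).choose_spec⟩
  set h : Y → ℤ := fun y => f (L2 y) with hh
  have hkey2' : ∀ (v' : FiberPow (⇑p) n) (y : Y), p (v'.1 i0) = y → f v' = h y :=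
    fun v' y hv' => key2 v' (L2 y) (by rw [hv', hL2 y])
  have hstepY : ∀ y, h (S y) = h y := by
    intro y
    have h1 : f (⟨fun i => T ((L2 y).1 i), hPT (L2 y).1 (L2 y).2⟩ : FiberPow (⇑p) n)
        = f (L2 y) := hinv (L2 y)
    have h2 : p ((⟨fun i => T ((L2 y).1 i), hPT (L2 y).1 (L2 y).2⟩ :
        FiberPow (⇑p) n).1 i0) = S y := by
      show p (T ((L2 y).1 i0)) = S y
      rw [hpqr, hfacr, hfacq, ← hpqr, hL2 y]
    have h3 := hkey2' _ _ h2
    rw [← h3, h1]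
  have hZpow : ∀ (k : ℤ) (y : Y), h ((S.toEquiv ^ k) y) = h y := by
    intro k
    induction k using Int.induction_on with
    | zero => intro y; simp
    | succ k ih =>
      intro y
      have heq : (S.toEquiv ^ ((k : ℤ) + 1)) y = (S.toEquiv ^ (k : ℤ)) (S y) := by
        rw [zpow_add_one, Equiv.Perm.mul_apply]
        rfl
      rw [heq, ih (S y), hstepY y]
    | pred k ih =>
      intro y
      have heq : (S.toEquiv ^ (-(k : ℤ) - 1)) y = (S.toEquiv ^ (-(k : ℤ))) (S.symm y) := by
        rw [zpow_sub_one, Equiv.Perm.mul_apply]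
        rfl
      rw [heq, ih (S.symm y)]
      have := hstepY (S.symm y)
      rw [S.apply_symm_apply] at this
      exact this.symm
  set y1 : Y := p (v.1 i0) with hy1
  set y2 : Y := p (w.1 i0) with hy2
  have hDcl : IsClosed {y | h y = h y1} := by
    have hDeq : {y | h y = h y1} =
        (fun v' : FiberPow (⇑p) n => p (v'.1 i0)) '' (⇑f ⁻¹' {h y1}) := by
      ext y
      constructor
      · intro hy
        refine ⟨L2 y, ?_, hL2 y⟩
        rw [Set.mem_preimage, Set.mem_singleton_iff]
        exact hy
      · rintro ⟨v', hv'm, hv'p⟩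
        rw [Set.mem_preimage, Set.mem_singleton_iff] at hv'm
        have := hkey2' v' y hv'p
        show h y = h y1
        rw [← this, hv'm]
    rw [hDeq]
    exact (((IsClosed.preimage f.continuous isClosed_singleton).isCompact).image
      (p.continuous.comp ((continuous_apply i0).comp continuous_subtype_val))).isClosed
  have hsub : Set.range (fun k : ℤ => (S.toEquiv ^ k) y1) ⊆ {y | h y = h y1} := by
    rintro _ ⟨k, rfl⟩
    exact hZpow k y1
  have huniv : ∀ y : Y, h y = h y1 := by
    intro y
    have : y ∈ closure (Set.range fun k : ℤ => (S.toEquiv ^ k) y1) := by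
      rw [(hminY y1).closure_eq]
      exact Set.mem_univ y
    have hmem : y ∈ {y | h y = h y1} := (closure_minimal hsub hDcl) this
    exact hmem
  have hfv : f v = h y1 := hkey2' v y1 rfl
  have hfw : f w = h y2 := hkey2' w y2 rfl
  rw [hfv, hfw, huniv y2]
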